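/- Let n ≥ 3 and let A, J be real n × 3 matrices whose rows a_μ, j_μ ∈ ℝ³ satisfy the constant SU(2) Yang–Mills system ∑_{μ=1}^n a_μ × (a_μ × a_ν) = j_ν for all ν = 1, …, n. Then there exist Q ∈ O(n) and P ∈ SO(3) such that QAP is diagonal (i.e. (QAP)_{νk} = 0 whenever ν ≠ k). Moreover, for all such Q and P the matrix QJP is also diagonal, and the diagonal entries a_k = (QAP)_{kk} and j_k = (QJP)_{kk}, k = 1, 2, 3, satisfy −a₁(a₂² + a₃²) = j₁, −a₂(a₁² + a₃²) = j₂, −a₃(a₁² + a₂²) = j₃. -/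

import Mathlib

open Matrix

lemma cross_cross_self (u v : Fin 3 → ℝ) :
    crossProduct u (crossProduct u v) = (u ⬝ᵥ v) • u - (u ⬝ᵥ u) • v := by
  ext i
  fin_cases i <;>
    simp [cross_apply, dotProduct, Fin.sum_univ_three] <;> ring

lemma Jeq (n : ℕ) (A J : Matrix (Fin n) (Fin 3) ℝ)
    (hYM : ∀ ν : Fin n,
      ∑ μ : Fin n, crossProduct (A μ) (crossProduct (A μ) (A ν)) = J ν) :
    J = A * (Aᵀ * A) - Matrix.trace (Aᵀ * A) • A := by
  ext ν k
  rw [← hYM ν]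
  simp only [cross_cross_self, Finset.sum_apply, Pi.sub_apply, Pi.smul_apply, smul_eq_mul,
    Matrix.sub_apply, Matrix.smul_apply, Matrix.mul_apply, Matrix.transpose_apply,
    Matrix.trace, Matrix.diag, dotProduct, smul_eq_mul, Finset.sum_sub_distrib]
  congr 1
  · simp only [Finset.sum_mul, Finset.mul_sum]
    rw [Finset.sum_comm]
    exact Finset.sum_congr rfl fun μ _ => Finset.sum_congr rfl fun i _ => by ring
  · rw [← Finset.sum_mul, Finset.sum_comm]

lemma su2_conj_eq (n : ℕ) (Q : Matrix (Fin n) (Fin n) ℝ) (P : Matrix (Fin 3) (Fin 3) ℝ)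
    (A : Matrix (Fin n) (Fin 3) ℝ)
    (hQ : Qᵀ * Q = 1) (hP : P * Pᵀ = 1) :
    Q * (A * (Aᵀ * A)) * P = (Q*A*P) * ((Q*A*P)ᵀ * (Q*A*P)) ∧
    Matrix.trace ((Q*A*P)ᵀ * (Q*A*P)) = Matrix.trace (Aᵀ * A) := by
  have cQ : ∀ (X : Matrix (Fin n) (Fin 3) ℝ), Qᵀ * (Q * X) = X := fun X => by
    rw [← Matrix.mul_assoc, hQ, Matrix.one_mul]
  have cP : ∀ (Y : Matrix (Fin 3) (Fin 3) ℝ), P * (Pᵀ * Y) = Y := fun Y => by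
    rw [← Matrix.mul_assoc, hP, Matrix.one_mul]
  constructor
  · simp only [Matrix.transpose_mul, Matrix.mul_assoc, cQ, cP]
  · simp only [Matrix.transpose_mul, Matrix.mul_assoc, cQ]
    rw [Matrix.trace_mul_comm, Matrix.mul_assoc, Matrix.mul_assoc, hP, Matrix.mul_one]

lemma diag_BtB (n : ℕ) (hn : 3 ≤ n) (B : Matrix (Fin n) (Fin 3) ℝ)
    (hB : ∀ (ν : Fin n) (k : Fin 3), (ν : ℕ) ≠ (k : ℕ) → B ν k = 0) :
    Bᵀ * B = Matrix.diagonal (fun k => B (Fin.castLE hn k) k ^ 2) := by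
  ext k l
  rw [Matrix.mul_apply]
  simp only [Matrix.transpose_apply]
  rcases eq_or_ne k l with rfl | hkl
  · rw [Matrix.diagonal_apply_eq]
    rw [Finset.sum_eq_single (Fin.castLE hn k)]
    · rw [sq]
    · intro ν _ hν
      rw [hB ν k (fun h => hν (Fin.ext (by simpa using h))), mul_zero]
    · simp
  · rw [Matrix.diagonal_apply_ne _ hkl]
    apply Finset.sum_eq_zero
    intro ν _
    rcases eq_or_ne ((ν : ℕ)) ((k : ℕ)) with h | h
    · rw [hB ν l (by rw [h]; exact fun hh => hkl (Fin.ext hh)), mul_zero]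
    · rw [hB ν k h, zero_mul]

lemma exists_diag (n : ℕ) (hn : 3 ≤ n) (A : Matrix (Fin n) (Fin 3) ℝ) :
    ∃ Q ∈ Matrix.orthogonalGroup (Fin n) ℝ,
      ∃ P ∈ Matrix.specialOrthogonalGroup (Fin 3) ℝ,
        ∀ (ν : Fin n) (k : Fin 3), (ν : ℕ) ≠ (k : ℕ) → (Q * A * P) ν k = 0 := by
  classical
  have hS : (Aᵀ * A).IsHermitian := by
    have := Matrix.isHermitian_conjTranspose_mul_self A
    rwa [Matrix.conjTranspose_eq_transpose_of_trivial] at this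
  set P : Matrix (Fin 3) (Fin 3) ℝ := (hS.eigenvectorUnitary : Matrix (Fin 3) (Fin 3) ℝ) with hPdef
  have hPmem : P ∈ Matrix.orthogonalGroup (Fin 3) ℝ := hS.eigenvectorUnitary.2
  have hPP : P * Pᵀ = 1 := by
    have := (Matrix.mem_orthogonalGroup_iff (Fin 3) ℝ).mp hPmem
    exact this
  have hPtP : Pᵀ * P = 1 := by
    have := (Matrix.mem_orthogonalGroup_iff' (Fin 3) ℝ).mp hPmem
    exact this
  set f : Fin 3 → ℝ := hS.eigenvalues with hfdef
  have hspec : Aᵀ * A = P * Matrix.diagonal f * Pᵀ := by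
    have := hS.spectral_theorem
    rwa [Unitary.conjStarAlgAut_apply, Matrix.star_eq_conjTranspose, Matrix.conjTranspose_eq_transpose_of_trivial,
      show (RCLike.ofReal ∘ hS.eigenvalues : Fin 3 → ℝ) = f from rfl] at this
  set M : Matrix (Fin n) (Fin 3) ℝ := A * P with hMdef
  have hMM : Mᵀ * M = Matrix.diagonal f := by
    rw [hMdef, Matrix.transpose_mul]
    simp only [Matrix.mul_assoc]
    rw [← Matrix.mul_assoc Aᵀ A P, hspec]
    simp only [Matrix.mul_assoc]
    rw [hPtP, Matrix.mul_one, ← Matrix.mul_assoc, hPtP, Matrix.one_mul]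
  -- columns as Euclidean vectors
  set v : Fin 3 → EuclideanSpace ℝ (Fin n) :=
    fun k => (WithLp.equiv 2 (Fin n → ℝ)).symm (fun ν => M ν k) with hvdef
  have hvap : ∀ k ν, v k ν = M ν k := fun k ν => rfl
  have hinner : ∀ k l, (inner ℝ (v k) (v l) : ℝ) = Matrix.diagonal f k l := by
    intro k l
    rw [← hMM, Matrix.mul_apply]
    simp only [PiLp.inner_apply, RCLike.inner_apply', starRingEnd_apply, star_trivial,
      Matrix.transpose_apply, hvap]
  set sS : Set (Fin n) := {ν | ∃ h : (ν : ℕ) < 3, v ⟨(ν : ℕ), h⟩ ≠ 0} with hsdef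
  set V : Fin n → EuclideanSpace ℝ (Fin n) :=
    fun ν => if h : (ν : ℕ) < 3 then ‖v ⟨(ν : ℕ), h⟩‖⁻¹ • v ⟨(ν : ℕ), h⟩ else 0 with hVdef
  have horth : Orthonormal ℝ (sS.restrict V) := by
    rw [orthonormal_iff_ite]
    rintro ⟨ν, h1, hz1⟩ ⟨ν', h2, hz2⟩
    simp only [Set.restrict, Set.domRestrict_apply, hVdef, dif_pos h1, dif_pos h2]
    rw [real_inner_smul_left, real_inner_smul_right]
    rcases eq_or_ne ν ν' with rfl | hne
    · rw [if_pos rfl]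
      have : (inner ℝ (v ⟨(ν : ℕ), h1⟩) (v ⟨(ν : ℕ), h1⟩) : ℝ)
          = ‖v ⟨(ν : ℕ), h1⟩‖ ^ 2 := real_inner_self_eq_norm_sq _
      rw [this]
      have hn0 : ‖v ⟨(ν : ℕ), h1⟩‖ ≠ 0 := norm_ne_zero_iff.mpr hz1
      field_simp
    · rw [if_neg (by simp [Subtype.ext_iff]; exact hne)]
      have hkk : (⟨(ν : ℕ), h1⟩ : Fin 3) ≠ ⟨(ν' : ℕ), h2⟩ := by
        intro h
        exact hne (Fin.ext (by simpa using congrArg Fin.val h))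
      rw [hinner, Matrix.diagonal_apply_ne _ hkk, mul_zero, mul_zero]
  obtain ⟨b, hb⟩ := horth.exists_orthonormalBasis_extension_of_card_eq
    (by simp [finrank_euclideanSpace])
  set Q : Matrix (Fin n) (Fin n) ℝ := Matrix.of (fun ν μ => b ν μ) with hQdef
  have hbinner := orthonormal_iff_ite.mp b.orthonormal
  have hQmem : Q ∈ Matrix.orthogonalGroup (Fin n) ℝ := by
    rw [Matrix.mem_orthogonalGroup_iff (Fin n) ℝ]
    ext ν ν'
    rw [Matrix.mul_apply, Matrix.one_apply]
    have := hbinner ν ν'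
    rw [PiLp.inner_apply] at this
    simp only [RCLike.inner_apply', starRingEnd_apply, star_trivial] at this
    simpa [hQdef, Matrix.transpose_apply] using this
  -- Q * M is diagonal
  have hQM : ∀ (ν : Fin n) (k : Fin 3), (ν : ℕ) ≠ (k : ℕ) → (Q * M) ν k = 0 := by
    intro ν k hνk
    rw [Matrix.mul_apply]
    have hsum : ∀ w : EuclideanSpace ℝ (Fin n),
        (inner ℝ (b ν) w : ℝ) = ∑ μ, Q ν μ * w μ := by
      intro w
      rw [PiLp.inner_apply]
      simp [RCLike.inner_apply, hQdef, mul_comm]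
    by_cases hz : v k = 0
    · apply Finset.sum_eq_zero
      intro μ _
      have : M μ k = 0 := by rw [← hvap k μ, hz]; rfl
      rw [this, mul_zero]
    · have hklt : ((Fin.castLE hn k : Fin n) : ℕ) < 3 := by simpa using k.isLt
      have hkval : (⟨((Fin.castLE hn k : Fin n) : ℕ), hklt⟩ : Fin 3) = k := by
        ext; simp
      have hmem : (Fin.castLE hn k : Fin n) ∈ sS := ⟨hklt, by rw [hkval]; exact hz⟩
      have hbk : b (Fin.castLE hn k) = ‖v k‖⁻¹ • v k := by
        rw [hb _ hmem, hVdef]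
        simp only [dif_pos hklt, hkval]
      have hvb : v k = ‖v k‖ • b (Fin.castLE hn k) := by
        rw [hbk, smul_smul, mul_inv_cancel₀ (norm_ne_zero_iff.mpr hz), one_smul]
      have hbb : (inner ℝ (b ν) (v k) : ℝ) = 0 := by
        rw [hvb, real_inner_smul_right]
        have hne : ν ≠ Fin.castLE hn k := fun h => hνk (by simp [h])
        rw [hbinner ν (Fin.castLE hn k), if_neg hne, mul_zero]
      rw [hsum (v k)] at hbb
      rw [← hbb]
      exact Finset.sum_congr rfl fun μ _ => by rw [hvap]
  -- fix determinant of P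
  have hdet2 : P.det * P.det = 1 := by
    have := congrArg Matrix.det hPP
    rwa [Matrix.det_mul, Matrix.det_transpose, Matrix.det_one] at this
  set dvec : Fin 3 → ℝ := fun k => if k = 2 then P.det else 1 with hdvec
  set P' : Matrix (Fin 3) (Fin 3) ℝ := P * Matrix.diagonal dvec with hP'def
  have hdd : Matrix.diagonal dvec * Matrix.diagonal dvec = 1 := by
    rw [Matrix.diagonal_mul_diagonal]
    convert Matrix.diagonal_one with k
    rcases eq_or_ne k 2 with rfl | hk
    · simpa [hdvec] using hdet2
    · simp [hdvec, hk]
  have hP'mem : P' ∈ Matrix.specialOrthogonalGroup (Fin 3) ℝ := by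
    rw [Matrix.mem_specialOrthogonalGroup_iff]
    constructor
    · rw [Matrix.mem_orthogonalGroup_iff (Fin 3) ℝ, hP'def, Matrix.transpose_mul,
        Matrix.diagonal_transpose]
      calc P * Matrix.diagonal dvec * (Matrix.diagonal dvec * Pᵀ)
          = P * (Matrix.diagonal dvec * Matrix.diagonal dvec) * Pᵀ := by
            simp only [Matrix.mul_assoc]
        _ = 1 := by rw [hdd, Matrix.mul_one, hPP]
    · rw [hP'def, Matrix.det_mul, Matrix.det_diagonal]
      rw [show (Finset.univ : Finset (Fin 3)).prod dvec = P.det by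
        rw [Fin.prod_univ_three]; simp [hdvec]]
      exact hdet2
  refine ⟨Q, hQmem, P', hP'mem, ?_⟩
  intro ν k hνk
  have : Q * A * P' = (Q * M) * Matrix.diagonal dvec := by
    rw [hP'def, hMdef, ← Matrix.mul_assoc, ← Matrix.mul_assoc]
  rw [this, Matrix.mul_diagonal, hQM ν k hνk, zero_mul]

/-- Theorem 2 of the paper (case `n ≥ 3`): if `A, J` satisfy the constant SU(2)
Yang–Mills system, then there exist `Q ∈ O(n)` and `P ∈ SO(3)` such that `Q*A*P`
is diagonal; and for all such `Q, P`, the matrix `Q*J*P` is also diagonal and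
the diagonal entries satisfy `-a₁(a₂²+a₃²) = j₁`, `-a₂(a₁²+a₃²) = j₂`,
`-a₃(a₁²+a₂²) = j₃`. -/
theorem su2_ym_diagonalization (n : ℕ) (hn : 3 ≤ n)
    (A J : Matrix (Fin n) (Fin 3) ℝ)
    (hYM : ∀ ν : Fin n,
      ∑ μ : Fin n, crossProduct (A μ) (crossProduct (A μ) (A ν)) = J ν) :
    (∃ Q ∈ Matrix.orthogonalGroup (Fin n) ℝ,
      ∃ P ∈ Matrix.specialOrthogonalGroup (Fin 3) ℝ,
        ∀ (ν : Fin n) (k : Fin 3), (ν : ℕ) ≠ (k : ℕ) → (Q * A * P) ν k = 0) ∧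
    (∀ Q ∈ Matrix.orthogonalGroup (Fin n) ℝ,
      ∀ P ∈ Matrix.specialOrthogonalGroup (Fin 3) ℝ,
        (∀ (ν : Fin n) (k : Fin 3), (ν : ℕ) ≠ (k : ℕ) → (Q * A * P) ν k = 0) →
        (∀ (ν : Fin n) (k : Fin 3), (ν : ℕ) ≠ (k : ℕ) → (Q * J * P) ν k = 0) ∧
        (∀ a j : Fin 3 → ℝ,
          (∀ k : Fin 3, a k = (Q * A * P) (Fin.castLE hn k) k) →
          (∀ k : Fin 3, j k = (Q * J * P) (Fin.castLE hn k) k) →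
          -a 0 * (a 1 ^ 2 + a 2 ^ 2) = j 0 ∧
          -a 1 * (a 0 ^ 2 + a 2 ^ 2) = j 1 ∧
          -a 2 * (a 0 ^ 2 + a 1 ^ 2) = j 2)) := by
  constructor
  · exact exists_diag n hn A
  · intro Q hQmem P hPmem hBdiag
    have hQ1 : Qᵀ * Q = 1 := by
      have := (Matrix.mem_orthogonalGroup_iff' (Fin n) ℝ).mp hQmem
      exact this
    have hP1 : P * Pᵀ = 1 := by
      have := (Matrix.mem_orthogonalGroup_iff (Fin 3) ℝ).mp
        ((Matrix.mem_specialOrthogonalGroup_iff).mp hPmem).1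
      exact this
    set B : Matrix (Fin n) (Fin 3) ℝ := Q * A * P with hBdef
    obtain ⟨hconj, htr⟩ := su2_conj_eq n Q P A hQ1 hP1
    set d : Fin 3 → ℝ := fun k => B (Fin.castLE hn k) k with hddef
    have hBtB : Bᵀ * B = Matrix.diagonal (fun k => d k ^ 2) := diag_BtB n hn B hBdiag
    have hJ : J = A * (Aᵀ * A) - Matrix.trace (Aᵀ * A) • A := Jeq n A J hYM
    have hQJP : Q * J * P = B * Matrix.diagonal (fun k => d k ^ 2)
        - (∑ l, d l ^ 2) • B := by
      rw [← Matrix.mul_assoc Q A (Aᵀ * A)] at hconj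
      rw [hJ, Matrix.mul_sub, Matrix.sub_mul, Matrix.mul_smul, Matrix.smul_mul,
        ← Matrix.mul_assoc]
      rw [hconj, hBtB, ← htr, hBtB, Matrix.trace_diagonal]
    have hQJPe : ∀ (ν : Fin n) (k : Fin 3),
        (Q * J * P) ν k = B ν k * d k ^ 2 - (∑ l, d l ^ 2) * B ν k := by
      intro ν k
      rw [hQJP, Matrix.sub_apply, Matrix.mul_diagonal, Matrix.smul_apply, smul_eq_mul]
    constructor
    · intro ν k hνk
      rw [hQJPe ν k, hBdiag ν k hνk, zero_mul, mul_zero, sub_zero]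
    · intro a j ha hj
      have hak : ∀ k, a k = d k := fun k => ha k
      have hjk : ∀ k, j k = d k * d k ^ 2 - (∑ l, d l ^ 2) * d k := by
        intro k
        rw [hj k, hQJPe _ k]
      refine ⟨?_, ?_, ?_⟩ <;>
        rw [hjk, hak, hak, hak, Fin.sum_univ_three] <;> ring
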